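/- Let B and A be small categories, F : B ⥤ Cat a functor with small values, u : A ⥤ B a functor, E a cocomplete category, and X : Grothendieck F ⥤ E a functor. Then the Beck–Chevalley comparison is an isomorphism: there is a natural isomorphism of functors A ⥤ E between Lan_{forget (u ⋙ F)} ((pre F u) ⋙ X) and u ⋙ Lan_{forget F} X. (Base change for left Kan extensions along Grothendieck opfibrations.) -/

import Mathlib

open CategoryTheory CategoryTheory.Limits

universe u v w

namespace BCAux

variable {C : Type u} [SmallCategory C] (F : C ⥤ Cat.{u, u})

/-- The inclusion of the fiber `F.obj c` into the costructured arrow category over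
`Grothendieck.forget F` at `c`. -/
lemma aux1 {D : Type*} [Category D] {a b c' d' z : D} (p1 : a = b) (p2 : b = c') (m : c' ⟶ c')
    (hm : m = 𝟙 c') (p3 : c' = d') (p4 : d' = a) (g : a ⟶ z) :
    eqToHom p1 ≫ eqToHom p2 ≫ m ≫ eqToHom p3 ≫ eqToHom p4 ≫ g = g := by
  subst hm p1 p2 p3
  simp

lemma aux2 {D : Type*} [Category D] (G : D ⥤ D) (hG : G = 𝟭 D) {x y a b c' v w : D} (f : x ⟶ y)
    (p1 : a = b) (p2 : b = c') (p3 : c' = G.obj x) (p4 : G.obj y = y)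
    (q1 : a = G.obj v) (q2 : v = w) (q3 : G.obj w = x) :
    eqToHom p1 ≫ eqToHom p2 ≫ eqToHom p3 ≫ G.map f ≫ eqToHom p4 =
      eqToHom q1 ≫ G.map (eqToHom q2) ≫ eqToHom q3 ≫ f := by
  subst hG
  simp

@[simps]
def fiberIncl (c : C) : F.obj c ⥤ CostructuredArrow (Grothendieck.forget F) c where
  obj x := CostructuredArrow.mk (Y := (Grothendieck.ι F c).obj x)
    (𝟙 c : (Grothendieck.forget F).obj ((Grothendieck.ι F c).obj x) ⟶ c)
  map f := CostructuredArrow.homMk ((Grothendieck.ι F c).map f) (by dsimp [Grothendieck.ι, Grothendieck.forget]; simp)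
  map_id x := by apply CostructuredArrow.hom_ext; exact (Grothendieck.ι F c).map_id x
  map_comp f g := by apply CostructuredArrow.hom_ext; exact (Grothendieck.ι F c).map_comp f g

instance fiberIncl_final (c : C) : (fiberIncl F c).Final := by
  constructor
  intro d
  let j₀ : StructuredArrow d (fiberIncl F c) :=
    StructuredArrow.mk (Y := (F.map d.hom).toFunctor.obj d.left.fiber)
      (CostructuredArrow.homMk (S := Grothendieck.forget F)
        (⟨d.hom, 𝟙 _⟩ : d.left ⟶ ((Grothendieck.ι F c).obj ((F.map d.hom).toFunctor.obj d.left.fiber)))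
        (by exact Category.comp_id d.hom))
  have h0 : ∀ (j : StructuredArrow d (fiberIncl F c)), (j₀ ⟶ j) := by
    intro j
    have h : j.hom.left.base = d.hom := by
      have := CostructuredArrow.w j.hom
      exact (Category.comp_id _).symm.trans this
    refine StructuredArrow.homMk (eqToHom (by simp only [j₀, StructuredArrow.mk_right, h]; rfl) ≫ j.hom.left.fiber) ?_
    apply CostructuredArrow.hom_ext
    apply Grothendieck.ext
    case w_base => exact (Category.comp_id _).trans h.symm
    case w_fiber =>
      simp [j₀, fiberIncl, Grothendieck.ι, Grothendieck.comp_fiber, eqToHom_map, CostructuredArrow.homMk, StructuredArrow.mk]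
      exact aux1 _ _ _ (CategoryTheory.Functor.map_id _ _) _ _ _
  have : Nonempty (StructuredArrow d (fiberIncl F c)) := ⟨j₀⟩
  apply zigzag_isConnected
  intro j₁ j₂
  exact .tail (.single (.inr ⟨h0 j₁⟩)) (.inl ⟨h0 j₂⟩)


variable {A : Type u} [SmallCategory A] (u : A ⥤ C)

/-- The comparison functor between costructured arrow categories. -/
@[simps]
def preCA (a : A) : CostructuredArrow (Grothendieck.forget (u ⋙ F)) a ⥤
    CostructuredArrow (Grothendieck.forget F) (u.obj a) where
  obj t := CostructuredArrow.mk (Y := (Grothendieck.pre F u).obj t.left)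
    (u.map t.hom : (Grothendieck.forget F).obj ((Grothendieck.pre F u).obj t.left) ⟶ u.obj a)
  map g := CostructuredArrow.homMk ((Grothendieck.pre F u).map g.left)
    (by
      have := CostructuredArrow.w g
      dsimp [Grothendieck.pre, Grothendieck.forget] at this ⊢
      rw [← u.map_comp, this])
  map_id t := by apply CostructuredArrow.hom_ext; simp; rfl
  map_comp f g := by
    apply CostructuredArrow.hom_ext
    simp

/-- The fiber inclusion composed with the comparison functor is isomorphic to the
fiber inclusion. -/
def fiberInclCompIso (a : A) :
    fiberIncl (u ⋙ F) a ⋙ preCA F u a ≅ fiberIncl F (u.obj a) :=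
  NatIso.ofComponents
    (fun x => CostructuredArrow.isoMk (Iso.refl _) (by exact (Category.id_comp _).trans (u.map_id a).symm))
    (fun f => by
      apply CostructuredArrow.hom_ext
      simp only [Functor.comp_obj, Functor.comp_map, CostructuredArrow.comp_left,
        CostructuredArrow.isoMk_hom_left]
      dsimp [fiberIncl, preCA, Grothendieck.pre, Grothendieck.ι]
      apply Grothendieck.ext
      case w_base => simp [CostructuredArrow.homMk, CostructuredArrow.isoMk]; exact u.map_id a
      case w_fiber =>
        simp [eqToHom_map, CostructuredArrow.homMk, CostructuredArrow.isoMk, Comma.isoMk]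
        exact aux2 _ (congrArg Cat.Hom.toFunctor (F.map_id _)) f _ _ _ _ _ _ _)

instance preCA_final (a : A) : (preCA F u a).Final := by
  have h1 : (fiberIncl (u ⋙ F) a ⋙ preCA F u a).Final :=
    Functor.final_of_natIso (fiberInclCompIso F u a).symm
  exact Functor.final_of_final_comp (fiberIncl (u ⋙ F) a) (preCA F u a)

end BCAux

/-- **Base change (Beck–Chevalley) for left Kan extensions along Grothendieck
opfibrations.** For small categories `A`, `B`, a functor `F : B ⥤ Cat` with small
values, `u : A ⥤ B`, a cocomplete category `E` and `X : Grothendieck F ⥤ E`, the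
left Kan extension of `(pre F u) ⋙ X` along `forget : Grothendieck (u ⋙ F) ⥤ A` is
naturally isomorphic to `u ⋙ Lan_{forget F} X`. -/
theorem beck_chevalley_lan_grothendieck {A B : Type u} [SmallCategory A]
    [SmallCategory B] (F : B ⥤ Cat.{u, u}) (u : A ⥤ B)
    {E : Type v} [Category.{w} E] [HasColimitsOfSize.{u, u} E]
    (X : Grothendieck F ⥤ E) :
    Nonempty ((Grothendieck.forget (u ⋙ F)).lan.obj (Grothendieck.pre F u ⋙ X) ≅
      u ⋙ (Grothendieck.forget F).lan.obj X) := by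
  let α : Grothendieck.pre F u ⋙ X ⟶ Grothendieck.forget (u ⋙ F) ⋙
      (u ⋙ (Grothendieck.forget F).lan.obj X) :=
    Functor.whiskerLeft (Grothendieck.pre F u) ((Grothendieck.forget F).lanUnit.app X)
  have hE : (Functor.LeftExtension.mk (u ⋙ (Grothendieck.forget F).lan.obj X)
      α).IsPointwiseLeftKanExtension := by
    intro a
    have h0 : (Functor.LeftExtension.mk ((Grothendieck.forget F).lan.obj X)
        ((Grothendieck.forget F).lanUnit.app X)).IsPointwiseLeftKanExtensionAt (u.obj a) :=
      Functor.isPointwiseLeftKanExtensionLeftKanExtensionUnit (Grothendieck.forget F) X (u.obj a)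
    exact (Functor.Final.isColimitWhiskerEquiv (BCAux.preCA F u a) _).symm h0
  haveI : (u ⋙ (Grothendieck.forget F).lan.obj X).IsLeftKanExtension α :=
    hE.isLeftKanExtension
  exact ⟨Functor.leftKanExtensionUnique _
    ((Grothendieck.forget (u ⋙ F)).lanUnit.app (Grothendieck.pre F u ⋙ X)) _ α⟩
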